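/- Let π : X × X → ℝ≥0 be a probability mass function on a finite set X ⊆ ℤ, ε > 0, and fix x' ∈ X with m = ∑_x π(x, x') > π(x', x'). Let n ≥ max_{x: π(x,x')>0} |x - x'| with n ≥ 1, and Φ = ln((exp(ε)·m - π(x',x'))/(m - π(x',x'))). Then f(n/Φ) = ∑_x (exp(|x-x'|·Φ/n) - exp(ε)) π(x, x') ≤ 0. -/

import Mathlib

theorem upper_bracket_point_nonpositive
    (X : Finset ℤ) (π : ℤ × ℤ → ℝ) (hπ : ∀ p : ℤ × ℤ, 0 ≤ π p)
    (hpmf : ∑ x ∈ X, ∑ y ∈ X, π (x, y) = 1)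
    (ε : ℝ) (hε : 0 < ε) (x' : ℤ) (hx' : x' ∈ X)
    (m : ℝ) (hm : m = ∑ x ∈ X, π (x, x')) (hmgt : π (x', x') < m)
    (n : ℕ) (hn : 1 ≤ n)
    (hmax : ∀ x ∈ X, 0 < π (x, x') → |x - x'| ≤ (n : ℤ))
    (Φ : ℝ) (hΦ : Φ = Real.log ((Real.exp ε * m - π (x', x')) / (m - π (x', x')))) :
    ∑ x ∈ X, (Real.exp ((|x - x'| : ℤ) * Φ / n) - Real.exp ε) * π (x, x') ≤ 0 := by
  set π0 := π (x', x') with hπ0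
  have hπ0nn : 0 ≤ π0 := hπ (x', x')
  have hd : 0 < m - π0 := by linarith
  have hε1 : 1 < Real.exp ε := by
    calc (1:ℝ) = Real.exp 0 := (Real.exp_zero).symm
    _ < Real.exp ε := Real.exp_lt_exp.mpr hε
  have hnum : 0 < Real.exp ε * m - π0 := by nlinarith
  have hΦpos : 0 < Φ := by
    rw [hΦ]
    apply Real.log_pos
    rw [lt_div_iff₀ hd]
    nlinarith
  have hexpΦ : Real.exp Φ * (m - π0) = Real.exp ε * m - π0 := by
    rw [hΦ, Real.exp_log (div_pos hnum hd), div_mul_cancel₀ _ (ne_of_gt hd)]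
  have hnpos : (0:ℝ) < n := by exact_mod_cast hn
  have hsplit := Finset.sum_eq_sum_sdiff_singleton_add hx'
    (fun x => (Real.exp ((|x - x'| : ℤ) * Φ / n) - Real.exp ε) * π (x, x'))
  rw [hsplit]
  have hterm : (Real.exp ((|x' - x'| : ℤ) * Φ / n) - Real.exp ε) * π (x', x')
      = (1 - Real.exp ε) * π0 := by
    simp [hπ0]
  rw [hterm]
  have hb : ∑ x ∈ X \ {x'}, (Real.exp ((|x - x'| : ℤ) * Φ / n) - Real.exp ε) * π (x, x')
      ≤ ∑ x ∈ X \ {x'}, (Real.exp Φ - Real.exp ε) * π (x, x') := by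
    apply Finset.sum_le_sum
    intro x hx
    rcases eq_or_lt_of_le (hπ (x, x')) with h0 | hpos
    · rw [← h0]; simp
    · apply mul_le_mul_of_nonneg_right _ (le_of_lt hpos)
      apply sub_le_sub_right
      apply Real.exp_le_exp.mpr
      have hle := hmax x (Finset.mem_sdiff.mp hx).1 hpos
      have hcast : ((|x - x'| : ℤ) : ℝ) ≤ n := by exact_mod_cast hle
      have hnn : (0:ℝ) ≤ ((|x - x'| : ℤ) : ℝ) := by positivity
      rw [div_le_iff₀ hnpos]
      nlinarith
  have hsum : ∑ x ∈ X \ {x'}, (Real.exp Φ - Real.exp ε) * π (x, x')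
      = (Real.exp Φ - Real.exp ε) * (m - π0) := by
    rw [← Finset.mul_sum]
    congr 1
    have h1 : ∑ x ∈ X \ {x'}, π (x, x') = (∑ x ∈ X, π (x, x')) - ∑ x ∈ ({x'} : Finset ℤ), π (x, x') :=
      Finset.sum_sdiff_eq_sub (Finset.singleton_subset_iff.mpr hx')
    simp only [Finset.sum_singleton] at h1
    rw [h1, ← hm]
  rw [hsum] at hb
  nlinarith
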